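/- For every positive integer k and every real x > 0, Q_{2k}(x) = ∑_{i=0}^{k} (C(k,i)/i!) x^i and Q_{2k-1}(x) = ∑_{i=0}^{k-1} (C(k,i+1)/i!) x^{i+1}, where the polynomials Q_n are defined by the recurrence Q_{-1} = 0, Q_0 = 1, Q_n(x) = c_n Q_{n-1}(x) + Q_{n-2}(x), with c_n = x if n is odd and c_n = 2/n if n is even. -/

import Mathlib

noncomputable def c (n : ℕ) (x : ℝ) : ℝ := if n % 2 = 1 then x else 2 / n

/-- `P n` is the paper's `P_{n-1}` (so `P 0 = P_{-1} = 1`, `P 1 = P_0 = 0`). -/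
noncomputable def P : ℕ → ℝ → ℝ
  | 0 => fun _ => 1
  | 1 => fun _ => 0
  | (n + 2) => fun x => c (n + 1) x * P (n + 1) x + P n x

/-- `Q n` is the paper's `Q_{n-1}` (so `Q 0 = Q_{-1} = 0`, `Q 1 = Q_0 = 1`). -/
noncomputable def Q : ℕ → ℝ → ℝ
  | 0 => fun _ => 0
  | 1 => fun _ => 1
  | (n + 2) => fun x => c (n + 1) x * Q (n + 1) x + Q n x

theorem stmt_6 (k : ℕ) (hk : 1 ≤ k) (x : ℝ) (hx : 0 < x) :
    Q (2 * k + 1) x = ∑ i ∈ Finset.range (k + 1), (Nat.choose k i : ℝ) / (Nat.factorial i) * x ^ i ∧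
    Q (2 * k) x = ∑ i ∈ Finset.range k, (Nat.choose k (i + 1) : ℝ) / (Nat.factorial i) * x ^ (i + 1) := by
  have unf : ∀ n : ℕ, Q (n + 2) x = c (n + 1) x * Q (n + 1) x + Q n x := fun n => rfl
  induction k, hk using Nat.le_induction with
  | base =>
    constructor
    · show Q 3 x = _
      simp [Q, c, Finset.sum_range_succ]; ring
    · show Q 2 x = _
      simp [Q, c, Finset.sum_range_succ]
  | succ k hk ih =>
    obtain ⟨hA, hB⟩ := ih
    have hmod1 : (2 * k + 1) % 2 = 1 := by omega
    have hmod2 : (2 * k + 2) % 2 ≠ 1 := by omega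
    have hQ2 : Q (2 * k + 2) x = x * Q (2 * k + 1) x + Q (2 * k) x := by
      rw [show 2 * k + 2 = 2 * k + 2 from rfl, unf (2 * k), c, hmod1, if_pos rfl]
    have hQ3 : Q (2 * k + 3) x = 1 / ((k:ℝ) + 1) * Q (2 * k + 2) x + Q (2 * k + 1) x := by
      rw [show 2 * k + 3 = (2 * k + 1) + 2 from rfl, unf (2 * k + 1), c, if_neg hmod2]
      have : ((2 * k + 2 : ℕ) : ℝ) = 2 * ((k:ℝ) + 1) := by push_cast; ring
      rw [show ((2 * k + 1 + 1 : ℕ)) = (2 * k + 2 : ℕ) from rfl, this]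
      have hk1 : ((k:ℝ) + 1) ≠ 0 := by positivity
      field_simp
    -- B part for k+1
    have hBnew : Q (2 * (k + 1)) x =
        ∑ i ∈ Finset.range (k + 1), (Nat.choose (k+1) (i + 1) : ℝ) / (Nat.factorial i) * x ^ (i + 1) := by
      have : 2 * (k + 1) = 2 * k + 2 := by ring
      rw [this, hQ2, hA, hB, Finset.mul_sum]
      have hext : ∑ i ∈ Finset.range k, (Nat.choose k (i + 1) : ℝ) / (Nat.factorial i) * x ^ (i + 1)
          = ∑ i ∈ Finset.range (k+1), (Nat.choose k (i + 1) : ℝ) / (Nat.factorial i) * x ^ (i + 1) := by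
        rw [Finset.sum_range_succ, Nat.choose_succ_self]
        simp
      rw [hext, ← Finset.sum_add_distrib]
      apply Finset.sum_congr rfl
      intro i _
      rw [Nat.choose_succ_succ k i]
      push_cast
      ring
    refine ⟨?_, hBnew⟩
    -- A part
    have h23 : 2 * (k + 1) + 1 = 2 * k + 3 := by ring
    rw [h23, hQ3, show 2 * k + 2 = 2 * (k+1) from by ring, hBnew, hA, Finset.mul_sum,
      Finset.sum_range_succ' (fun i => (Nat.choose (k+1) i : ℝ) / (Nat.factorial i) * x ^ i) (k+1),
      Finset.sum_range_succ' (fun i => (Nat.choose k i : ℝ) / (Nat.factorial i) * x ^ i) k]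
    simp only [Nat.choose_zero_right, Nat.factorial_zero, pow_zero]
    norm_num
    have hext : ∑ i ∈ Finset.range k, (Nat.choose k (i + 1) : ℝ) / (Nat.factorial (i+1)) * x ^ (i + 1)
        = ∑ i ∈ Finset.range (k+1), (Nat.choose k (i + 1) : ℝ) / (Nat.factorial (i+1)) * x ^ (i + 1) := by
      rw [Finset.sum_range_succ, Nat.choose_succ_self]
      simp
    rw [hext, ← add_assoc, ← Finset.sum_add_distrib]
    congr 1
    apply Finset.sum_congr rfl
    intro i _
    have a := Nat.add_one_mul_choose_eq k i
    -- a : (k+1) * choose k i = choose (k+1) (i+1) * (i+1)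
    have h1' : ((k:ℝ) + 1) * (Nat.choose k i : ℝ) = (Nat.choose (k+1) (i+1) : ℝ) * ((i:ℝ) + 1) := by
      exact_mod_cast congrArg (Nat.cast : ℕ → ℝ) a
    have h2' : (Nat.choose (k+1) (i+1) : ℝ) = (Nat.choose k i : ℝ) + (Nat.choose k (i+1) : ℝ) := by
      exact_mod_cast congrArg (Nat.cast : ℕ → ℝ) (Nat.choose_succ_succ k i)
    have hfact : (Nat.factorial (i+1) : ℝ) = ((i:ℝ)+1) * Nat.factorial i := by
      rw [Nat.factorial_succ]; push_cast; ring
    have hk1 : ((k:ℝ) + 1) ≠ 0 := by positivity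
    have hi1 : ((i:ℝ) + 1) ≠ 0 := by positivity
    have hfne : (Nat.factorial i : ℝ) ≠ 0 := by positivity
    have key : ((k:ℝ)+1)⁻¹ * ((Nat.choose (k+1) (i+1) : ℝ) / (Nat.factorial i))
        + (Nat.choose k (i+1) : ℝ) / (((i:ℝ)+1) * Nat.factorial i)
        = (Nat.choose (k+1) (i+1) : ℝ) / (((i:ℝ)+1) * Nat.factorial i) := by
      rw [inv_mul_eq_div, div_div, div_add_div _ _ (mul_ne_zero hfne hk1) (mul_ne_zero hi1 hfne), div_eq_div_iff (mul_ne_zero (mul_ne_zero hfne hk1) (mul_ne_zero hi1 hfne)) (mul_ne_zero hi1 hfne)]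
      linear_combination (-((↑i+1) * (↑i.factorial:ℝ)^2)) * h1' + (-((↑k+1) * (↑i+1) * (↑i.factorial:ℝ)^2)) * h2'
    rw [hfact]
    calc (↑k + 1)⁻¹ * (↑((k+1).choose (i+1)) / ↑(Nat.factorial i) * x ^ (i + 1))
          + ↑(k.choose (i+1)) / (((i:ℝ)+1) * ↑(Nat.factorial i)) * x ^ (i + 1)
        = ((↑k+1)⁻¹ * (↑((k+1).choose (i+1)) / ↑(Nat.factorial i))
          + ↑(k.choose (i+1)) / (((i:ℝ)+1) * ↑(Nat.factorial i))) * x ^ (i+1) := by ring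
      _ = ↑((k+1).choose (i+1)) / (((i:ℝ)+1) * ↑(Nat.factorial i)) * x ^ (i + 1) := by rw [key]
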